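/- For every real t with 0 < t < 2, with Y_{1,s} := Ỹ_s/Y_s, S_{1,s} := S̃_s − S_s, Q₁(t) := (1/2)t(1+t/2), Q₂(t) := t/2, Q₃(t) := (1/2)t(1−t/2): (i) Y_{1,1}(t)^{1/2} + Y_{1,1}(t)^{−1/2} + 2 = S_{1,1}(t)²/(2Q₁(t)); (ii) Y_{1,2}(t) + Y_{1,2}(t)^{−1} + 2 = S_{1,2}(t)²/(2Q₂(t)); (iii) Y_{1,3}(t)^{3/2} + Y_{1,3}(t)^{−3/2} + 2 = S_{1,3}(t)²/(2Q₃(t)). (Real powers of positive reals; these are the instances s = 1, 2, 3 of Y_{1,s}^{s/2} + Y_{1,s}^{−s/2} + 2 = S_{1,s}²/(2Q_s).) -/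

import Mathlib

/-! Göttsche–Kool universal functions of a real variable `t`, with all square
roots the nonnegative real square roots.  The `t`-suffixed versions
(`gkYt`, `gkZt`, `gkSt`) are the sign-flipped functions obtained by
replacing `√t` with `−√t`. -/

lemma half_sum (p q : ℝ) (hp : 0 < p) (hq : 0 < q) :
    (p/q)^((1:ℝ)/2) + (p/q)^(-(1:ℝ)/2) = (p + q)/Real.sqrt (p*q) := by
  obtain ⟨a, ha, rfl⟩ : ∃ s : ℝ, 0 < s ∧ p = s^2 :=
    ⟨Real.sqrt p, Real.sqrt_pos.mpr hp, (Real.sq_sqrt hp.le).symm⟩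
  obtain ⟨b, hb, rfl⟩ : ∃ s : ℝ, 0 < s ∧ q = s^2 :=
    ⟨Real.sqrt q, Real.sqrt_pos.mpr hq, (Real.sq_sqrt hq.le).symm⟩
  have h1 : (a^2/b^2)^((1:ℝ)/2) = a / b := by
    rw [← Real.sqrt_eq_rpow, Real.sqrt_div (by positivity), Real.sqrt_sq ha.le,
      Real.sqrt_sq hb.le]
  have h2 : (a^2/b^2)^(-(1:ℝ)/2) = (a / b)⁻¹ := by
    rw [neg_div, Real.rpow_neg (by positivity), h1]
  rw [h1, h2, show a^2*b^2 = (a*b)^2 by ring, Real.sqrt_sq (by positivity)]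
  field_simp

lemma threehalf_sum (p q : ℝ) (hp : 0 < p) (hq : 0 < q) :
    (p/q)^((3:ℝ)/2) + (p/q)^(-(3:ℝ)/2)
      = (p^3 + q^3)/(p * q * Real.sqrt (p*q)) := by
  obtain ⟨a, ha, rfl⟩ : ∃ s : ℝ, 0 < s ∧ p = s^2 :=
    ⟨Real.sqrt p, Real.sqrt_pos.mpr hp, (Real.sq_sqrt hp.le).symm⟩
  obtain ⟨b, hb, rfl⟩ : ∃ s : ℝ, 0 < s ∧ q = s^2 :=
    ⟨Real.sqrt q, Real.sqrt_pos.mpr hq, (Real.sq_sqrt hq.le).symm⟩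
  have h1 : (a^2/b^2)^((3:ℝ)/2) = (a / b)^3 := by
    rw [show ((3:ℝ)/2) = (1/2) * (3:ℕ) by norm_num,
      Real.rpow_mul (by positivity), Real.rpow_natCast,
      ← Real.sqrt_eq_rpow, Real.sqrt_div (by positivity), Real.sqrt_sq ha.le,
      Real.sqrt_sq hb.le]
  have h2 : (a^2/b^2)^(-(3:ℝ)/2) = ((a / b)^3)⁻¹ := by
    rw [neg_div, Real.rpow_neg (by positivity), h1]
  rw [h1, h2, show a^2*b^2 = (a*b)^2 by ring, Real.sqrt_sq (by positivity)]
  field_simp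

noncomputable def gkY1 (t : ℝ) : ℝ := (1 + t) + Real.sqrt t * Real.sqrt (1 + 3*t/4)
noncomputable def gkYt1 (t : ℝ) : ℝ := (1 + t) - Real.sqrt t * Real.sqrt (1 + 3*t/4)
noncomputable def gkY2 (t : ℝ) : ℝ := Real.sqrt t + Real.sqrt (1 + t)
noncomputable def gkYt2 (t : ℝ) : ℝ := -Real.sqrt t + Real.sqrt (1 + t)
noncomputable def gkY3 (t : ℝ) : ℝ := 1 + Real.sqrt t * Real.sqrt (1 - t/4)
noncomputable def gkYt3 (t : ℝ) : ℝ := 1 - Real.sqrt t * Real.sqrt (1 - t/4)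
noncomputable def gkZ1 (t : ℝ) : ℝ :=
  (1 + 3*t/4 - (1/2) * Real.sqrt t * Real.sqrt (1 + 3*t/4)) / (1 + t/2)
noncomputable def gkZt1 (t : ℝ) : ℝ :=
  (1 + 3*t/4 + (1/2) * Real.sqrt t * Real.sqrt (1 + 3*t/4)) / (1 + t/2)
noncomputable def gkZ2 (t : ℝ) : ℝ := 1 + t - Real.sqrt t * Real.sqrt (1 + t)
noncomputable def gkZt2 (t : ℝ) : ℝ := 1 + t + Real.sqrt t * Real.sqrt (1 + t)
noncomputable def gkZ3 (t : ℝ) : ℝ :=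
  (1 + t/2) * ((1 - t/4)*(1 + t/2)
    - (3/2) * Real.sqrt t * Real.sqrt (1 - t/4) * (1 - t/6)) / (1 - t/2)^3
noncomputable def gkZt3 (t : ℝ) : ℝ :=
  (1 + t/2) * ((1 - t/4)*(1 + t/2)
    + (3/2) * Real.sqrt t * Real.sqrt (1 - t/4) * (1 - t/6)) / (1 - t/2)^3
noncomputable def gkS1 (t : ℝ) : ℝ := -t/2 + Real.sqrt t * Real.sqrt (1 + 3*t/4)
noncomputable def gkSt1 (t : ℝ) : ℝ := -t/2 - Real.sqrt t * Real.sqrt (1 + 3*t/4)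
noncomputable def gkS2 (t : ℝ) : ℝ := -t + Real.sqrt t * Real.sqrt (1 + t)
noncomputable def gkSt2 (t : ℝ) : ℝ := -t - Real.sqrt t * Real.sqrt (1 + t)
noncomputable def gkS3 (t : ℝ) : ℝ :=
  (-(3/2)*t*(1 - t/6) + Real.sqrt t * Real.sqrt (1 - t/4) * (1 + t/2)) / (1 - t/2)
noncomputable def gkSt3 (t : ℝ) : ℝ :=
  (-(3/2)*t*(1 - t/6) - Real.sqrt t * Real.sqrt (1 - t/4) * (1 + t/2)) / (1 - t/2)
noncomputable def gkV2 (t : ℝ) : ℝ := (1 + t)^2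
noncomputable def gkV3 (t : ℝ) : ℝ := (1 + t/2)^3 / (1 - t/2)
noncomputable def gkW1 (t : ℝ) : ℝ := (1 + t/2)⁻¹
noncomputable def gkW2 (t : ℝ) : ℝ := (Real.sqrt (1 + t))⁻¹
noncomputable def gkW3 (t : ℝ) : ℝ := 2 / (2 + t)
noncomputable def gkX1 (t : ℝ) : ℝ :=
  (1 + t/2) ^ (-(3:ℝ)/4) * (1 + 3*t/4) ^ (-(1:ℝ)/2)
noncomputable def gkX2 (t : ℝ) : ℝ := (1 + t) ^ (-(3:ℝ)/2)
noncomputable def gkX3 (t : ℝ) : ℝ :=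
  (1 - t/2) ^ ((3:ℝ)/4) * (1 - t/4) ^ (-(1:ℝ)/2) * (1 + t/2) ^ (-(4:ℝ))

/-- for `0 < t < 2`, with `Y_{1,s} = Ỹ_s/Y_s`,
`S_{1,s} = S̃_s − S_s`, `Q₁(t) = (1/2)t(1+t/2)`, `Q₂(t) = t/2`,
`Q₃(t) = (1/2)t(1−t/2)`, the blowup-equation identity
`Y_{1,s}^{s/2} + Y_{1,s}^{−s/2} + 2 = S_{1,s}²/(2Q_s)` holds for
`s = 1, 2, 3` (real powers of positive reals). -/
theorem stmt_16 (t : ℝ) (ht0 : 0 < t) (ht2 : t < 2) :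
    (gkYt1 t / gkY1 t) ^ ((1:ℝ)/2) + (gkYt1 t / gkY1 t) ^ (-(1:ℝ)/2) + 2
      = (gkSt1 t - gkS1 t)^2 / (2 * ((1/2)*t*(1 + t/2))) ∧
    (gkYt2 t / gkY2 t) + (gkYt2 t / gkY2 t)⁻¹ + 2
      = (gkSt2 t - gkS2 t)^2 / (2 * (t/2)) ∧
    (gkYt3 t / gkY3 t) ^ ((3:ℝ)/2) + (gkYt3 t / gkY3 t) ^ (-(3:ℝ)/2) + 2
      = (gkSt3 t - gkS3 t)^2 / (2 * ((1/2)*t*(1 - t/2))) := by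

  have ha2 : Real.sqrt t ^ 2 = t := Real.sq_sqrt ht0.le
  have ha0 : 0 < Real.sqrt t := Real.sqrt_pos.mpr ht0
  set a := Real.sqrt t with ha_def
  have h1t : (1:ℝ) + t/2 > 0 := by linarith
  have h3t : (1:ℝ) - t/2 > 0 := by linarith
  refine ⟨?_, ?_, ?_⟩
  · -- s = 1
    have hb2 : Real.sqrt (1 + 3*t/4) ^ 2 = 1 + 3*t/4 := Real.sq_sqrt (by linarith)
    have hb0 : 0 < Real.sqrt (1 + 3*t/4) := Real.sqrt_pos.mpr (by linarith)
    set b := Real.sqrt (1 + 3*t/4) with hb_def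
    have hpq : gkYt1 t * gkY1 t = (1 + t/2)^2 := by
      unfold gkYt1 gkY1
      rw [← ha_def, ← hb_def]
      nlinarith [ha2, hb2]
    have hq : 0 < gkY1 t := by
      unfold gkY1; rw [← ha_def, ← hb_def]; positivity
    have hp : 0 < gkYt1 t := by nlinarith [hpq, hq, sq_nonneg (1 + t/2), h1t]
    rw [half_sum _ _ hp hq, hpq, Real.sqrt_sq h1t.le]
    have hsum : gkYt1 t + gkY1 t = 2 + 2*t := by
      unfold gkYt1 gkY1; ring
    have hS : (gkSt1 t - gkS1 t)^2 = 4*t*(1 + 3*t/4) := by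
      unfold gkSt1 gkS1
      rw [← ha_def, ← hb_def]
      nlinarith [ha2, hb2]
    rw [hsum, hS]
    field_simp
    ring
  · -- s = 2
    have hc2 : Real.sqrt (1 + t) ^ 2 = 1 + t := Real.sq_sqrt (by linarith)
    have hc0 : 0 < Real.sqrt (1 + t) := Real.sqrt_pos.mpr (by linarith)
    have hac : a < Real.sqrt (1 + t) := by
      rw [ha_def]; exact Real.sqrt_lt_sqrt ht0.le (by linarith)
    set c := Real.sqrt (1 + t) with hc_def
    have hq : (0:ℝ) < a + c := by linarith
    have hS : (gkSt2 t - gkS2 t)^2 = 4*t*(1 + t) := by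
      unfold gkSt2 gkS2
      rw [← ha_def, ← hc_def]
      nlinarith [ha2, hc2]
    unfold gkYt2 gkY2
    rw [← ha_def, ← hc_def, hS]
    have hcma : (0:ℝ) < -a + c := by linarith
    rw [inv_div]
    field_simp
    linear_combination (4*(1+t))*ha2 - (4*t)*hc2
  · -- s = 3
    have hb2 : Real.sqrt (1 - t/4) ^ 2 = 1 - t/4 := Real.sq_sqrt (by linarith)
    have hb0 : 0 < Real.sqrt (1 - t/4) := Real.sqrt_pos.mpr (by linarith)
    set b := Real.sqrt (1 - t/4) with hb_def
    have hpq : gkYt3 t * gkY3 t = (1 - t/2)^2 := by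
      unfold gkYt3 gkY3
      rw [← ha_def, ← hb_def]
      nlinarith [ha2, hb2]
    have hq : 0 < gkY3 t := by
      unfold gkY3; rw [← ha_def, ← hb_def]; positivity
    have hp : 0 < gkYt3 t := by nlinarith [hpq, hq, h3t, sq_nonneg (1 - t/2)]
    rw [threehalf_sum _ _ hp hq, hpq, Real.sqrt_sq h3t.le]
    have hcube : gkYt3 t ^ 3 + gkY3 t ^ 3 = 2 + 6*t - 3*t^2/2 := by
      unfold gkYt3 gkY3
      rw [← ha_def, ← hb_def]
      nlinarith [ha2, hb2]
    have hS : (gkSt3 t - gkS3 t)^2 = 4*(t - t^2/4)*(1 + t/2)^2/(1 - t/2)^2 := by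
      unfold gkSt3 gkS3
      rw [← ha_def, ← hb_def]
      rw [div_sub_div_same, div_pow]
      congr 1
      linear_combination (4*b^2*(1+t/2)^2)*ha2 + (4*t*(1+t/2)^2)*hb2
    rw [hcube, hS, div_div]
    rw [div_add' _ _ _ (by positivity), div_eq_div_iff (by positivity) (by positivity)]
    ring
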